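/- Let X be a topological space and Y an open subspace of X. If any two disjoint open subsets of X can be separated by zero-sets of X with disjoint interiors, then any two disjoint open subsets of Y can be separated by zero-sets of Y with disjoint interiors (interiors computed in Y). -/
import Mathlib


/-- An open subspace of a WED-space is a WED-space. -/
theorem stmt13 {X : Type*} [TopologicalSpace X] (Y : Set X) (hY : IsOpen Y)
    (hWED : ∀ U V : Set X, IsOpen U → IsOpen V → U ∩ V = ∅ →
      ∃ f g : C(X, ℝ), U ⊆ interior (f ⁻¹' {0}) ∧ V ⊆ interior (g ⁻¹' {0}) ∧
        interior (f ⁻¹' {0}) ∩ interior (g ⁻¹' {0}) = ∅) :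
    ∀ U V : Set Y, IsOpen U → IsOpen V → U ∩ V = ∅ →
      ∃ f g : C(Y, ℝ), U ⊆ interior (f ⁻¹' {0}) ∧ V ⊆ interior (g ⁻¹' {0}) ∧
        interior (f ⁻¹' {0}) ∩ interior (g ⁻¹' {0}) = ∅ := by
  intro U V hU hV hUV
  have hmap : IsOpenMap (Subtype.val : Y → X) := hY.isOpenMap_subtype_val
  have hU' : IsOpen (Subtype.val '' U) := hmap U hU
  have hV' : IsOpen (Subtype.val '' V) := hmap V hV
  have hdisj : (Subtype.val '' U) ∩ (Subtype.val '' V) = ∅ := by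
    rw [← Set.image_inter Subtype.val_injective, hUV, Set.image_empty]
  obtain ⟨f, g, hfU, hgV, hfg⟩ := hWED _ _ hU' hV' hdisj
  refine ⟨f.restrict Y, g.restrict Y, ?_, ?_, ?_⟩
  · intro y hy
    have : (y : X) ∈ interior (f ⁻¹' {0}) := hfU ⟨y, hy, rfl⟩
    have h2 := preimage_interior_subset_interior_preimage
      (continuous_subtype_val (p := fun x => x ∈ Y)) (t := f ⁻¹' {0})
    exact h2 this
  · intro y hy
    have : (y : X) ∈ interior (g ⁻¹' {0}) := hgV ⟨y, hy, rfl⟩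
    have h2 := preimage_interior_subset_interior_preimage
      (continuous_subtype_val (p := fun x => x ∈ Y)) (t := g ⁻¹' {0})
    exact h2 this
  · ext y
    simp only [Set.mem_inter_iff, Set.mem_empty_iff_false, iff_false, not_and]
    intro h1 h2
    have hemb := hY.isOpenEmbedding_subtypeVal
    have hn1 : (Subtype.val ⁻¹' (f ⁻¹' {0}) : Set Y) ∈ nhds y :=
      mem_interior_iff_mem_nhds.mp h1
    have hn2 : (Subtype.val ⁻¹' (g ⁻¹' {0}) : Set Y) ∈ nhds y :=
      mem_interior_iff_mem_nhds.mp h2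
    have hmapn := hemb.map_nhds_eq y
    have hf1 : f ⁻¹' {0} ∈ nhds (y : X) := by
      rw [← hmapn]
      exact Filter.mem_map.mpr (Filter.mem_of_superset hn1 (fun z hz => hz))
    have hg1 : g ⁻¹' {0} ∈ nhds (y : X) := by
      rw [← hmapn]
      exact Filter.mem_map.mpr (Filter.mem_of_superset hn2 (fun z hz => hz))
    have : (y : X) ∈ interior (f ⁻¹' {0}) ∩ interior (g ⁻¹' {0}) :=
      ⟨mem_interior_iff_mem_nhds.mpr hf1, mem_interior_iff_mem_nhds.mpr hg1⟩
    rw [hfg] at this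
    exact this
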